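/- Let n, d ∈ ℕ and let r : Fin d → (formal power series in the variables Fin n ⊕ Fin d over ℝ) be such that for each j, every coefficient of r j in total degree ≤ 1 vanishes. Define inductively v_0 = 0 and v_{m+1} j = the substitution of the family (Sum.inl i ↦ X_i, Sum.inr l ↦ v_m l) into r j. Then for every k ∈ ℕ, every multi-index e ∈ ℕ^{Fin n} with |e| ≤ k, every j ∈ Fin d, and every m ≥ k, one has coeff_e (v_m j) = coeff_e (v_k j); i.e., every coefficient of order ≤ k of the iterates is determined after at most k iterations and does not change thereafter. -/

import Mathlib

open MvPowerSeries

lemma degsum_add (τ : Type*) (p q : τ →₀ ℕ) :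
    ((p + q).sum fun _ a => a) = (p.sum fun _ a => a) + (q.sum fun _ a => a) :=
  Finsupp.sum_add_index' (fun _ => rfl) (fun _ _ _ => rfl)

lemma degsum_eq_zero_iff (τ : Type*) (p : τ →₀ ℕ) :
    (p.sum fun _ a => a) = 0 ↔ p = 0 := Finsupp.degree_eq_zero_iff p

/-- One multiplication step: multiplying by a series of order ≥ 1 agreeing
up to degree N raises the agreement degree by one. -/
lemma agree_step {τ : Type*} (N s : ℕ) (hs : 1 ≤ s) (f f' P P' : MvPowerSeries τ ℝ)
    (hf0 : MvPowerSeries.coeff 0 f = 0) (hf0' : MvPowerSeries.coeff 0 f' = 0)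
    (hf : ∀ e : τ →₀ ℕ, (e.sum fun _ a => a) ≤ N →
      MvPowerSeries.coeff e f = MvPowerSeries.coeff e f')
    (hP : ∀ e : τ →₀ ℕ, (e.sum fun _ a => a) < s → MvPowerSeries.coeff e P = 0)
    (hP' : ∀ e : τ →₀ ℕ, (e.sum fun _ a => a) < s → MvPowerSeries.coeff e P' = 0)
    (hPA : ∀ e : τ →₀ ℕ, (e.sum fun _ a => a) ≤ N + s - 1 →
      MvPowerSeries.coeff e P = MvPowerSeries.coeff e P') :
    (∀ e : τ →₀ ℕ, (e.sum fun _ a => a) < s + 1 → MvPowerSeries.coeff e (f * P) = 0) ∧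
    (∀ e : τ →₀ ℕ, (e.sum fun _ a => a) < s + 1 → MvPowerSeries.coeff e (f' * P') = 0) ∧
    (∀ e : τ →₀ ℕ, (e.sum fun _ a => a) ≤ N + s →
      MvPowerSeries.coeff e (f * P) = MvPowerSeries.coeff e (f' * P')) := by
  classical
  refine ⟨?_, ?_, ?_⟩
  · intro e he
    rw [MvPowerSeries.coeff_mul]
    apply Finset.sum_eq_zero
    intro p hp
    rw [Finset.HasAntidiagonal.mem_antidiagonal] at hp
    by_cases h1 : p.1 = 0
    · rw [h1, hf0, zero_mul]
    · have h1' : 1 ≤ p.1.sum fun _ a => a :=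
        Nat.pos_of_ne_zero (fun h => h1 ((degsum_eq_zero_iff τ p.1).mp h))
      have hsum : (p.1.sum fun _ a => a) + (p.2.sum fun _ a => a) = e.sum fun _ a => a := by
        rw [← degsum_add, hp]
      rw [hP p.2 (by omega), mul_zero]
  · intro e he
    rw [MvPowerSeries.coeff_mul]
    apply Finset.sum_eq_zero
    intro p hp
    rw [Finset.HasAntidiagonal.mem_antidiagonal] at hp
    by_cases h1 : p.1 = 0
    · rw [h1, hf0', zero_mul]
    · have h1' : 1 ≤ p.1.sum fun _ a => a :=
        Nat.pos_of_ne_zero (fun h => h1 ((degsum_eq_zero_iff τ p.1).mp h))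
      have hsum : (p.1.sum fun _ a => a) + (p.2.sum fun _ a => a) = e.sum fun _ a => a := by
        rw [← degsum_add, hp]
      rw [hP' p.2 (by omega), mul_zero]
  · intro e he
    rw [MvPowerSeries.coeff_mul, MvPowerSeries.coeff_mul]
    apply Finset.sum_congr rfl
    intro p hp
    rw [Finset.HasAntidiagonal.mem_antidiagonal] at hp
    have hsum : (p.1.sum fun _ a => a) + (p.2.sum fun _ a => a) = e.sum fun _ a => a := by
      rw [← degsum_add, hp]
    by_cases hq : (p.2.sum fun _ a => a) < s
    · rw [hP p.2 hq, hP' p.2 hq, mul_zero, mul_zero]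
    · push_neg at hq
      by_cases h1 : p.1 = 0
      · rw [h1, hf0, hf0', zero_mul, zero_mul]
      · have h1' : 1 ≤ p.1.sum fun _ a => a :=
          Nat.pos_of_ne_zero (fun h => h1 ((degsum_eq_zero_iff τ p.1).mp h))
        rw [hf p.1 (by omega), hPA p.2 (by omega)]

lemma map_prod_toMultiset {α M : Type*} [CommMonoid M] (u : α →₀ ℕ) (g : α → M) :
    (u.toMultiset.map g).prod = u.prod fun i k => g i ^ k := by
  rw [Finsupp.toMultiset_map, Finsupp.prod_toMultiset]
  exact Finsupp.prod_mapDomain_index (fun _ => pow_zero _) (fun _ _ _ => pow_add _ _ _)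

lemma agree_prod_multiset {σ τ : Type*} (N : ℕ) (g g' : σ → MvPowerSeries τ ℝ)
    (hg0 : ∀ i, MvPowerSeries.coeff 0 (g i) = 0)
    (hg0' : ∀ i, MvPowerSeries.coeff 0 (g' i) = 0)
    (hg : ∀ i, ∀ e : τ →₀ ℕ, (e.sum fun _ a => a) ≤ N →
      MvPowerSeries.coeff e (g i) = MvPowerSeries.coeff e (g' i)) :
    ∀ m : Multiset σ, m ≠ 0 →
      (∀ e : τ →₀ ℕ, (e.sum fun _ a => a) < Multiset.card m →
        MvPowerSeries.coeff e ((m.map g).prod) = 0) ∧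
      (∀ e : τ →₀ ℕ, (e.sum fun _ a => a) < Multiset.card m →
        MvPowerSeries.coeff e ((m.map g').prod) = 0) ∧
      ∀ e : τ →₀ ℕ, (e.sum fun _ a => a) ≤ N + Multiset.card m - 1 →
        MvPowerSeries.coeff e ((m.map g).prod) = MvPowerSeries.coeff e ((m.map g').prod) := by
  have hord : ∀ (h : σ → MvPowerSeries τ ℝ), (∀ i, MvPowerSeries.coeff 0 (h i) = 0) →
      ∀ i, ∀ e : τ →₀ ℕ, (e.sum fun _ a => a) < 1 → MvPowerSeries.coeff e (h i) = 0 := by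
    intro h h0 i e he
    have : e = 0 := (degsum_eq_zero_iff τ e).mp (by omega)
    rw [this, h0]
  intro m
  induction m using Multiset.induction with
  | empty => intro h; exact absurd rfl h
  | cons i t ih =>
    intro _
    by_cases ht : t = (0 : Multiset σ)
    · subst ht
      simp only [Multiset.map_cons, Multiset.map_zero, Multiset.prod_cons, Multiset.prod_zero,
        mul_one, Multiset.card_cons, Multiset.card_zero, zero_add]
      exact ⟨hord g hg0 i, hord g' hg0' i, fun e he => hg i e (by omega)⟩
    · obtain ⟨h0, h0', hA⟩ := ih ht
      have htc : 1 ≤ Multiset.card t := by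
        rcases Multiset.exists_mem_of_ne_zero ht with ⟨a, ha⟩
        exact Multiset.card_pos.mpr (fun h => by simp [h] at ha)
      simp only [Multiset.map_cons, Multiset.prod_cons, Multiset.card_cons]
      obtain ⟨o1, o2, a3⟩ := agree_step N (Multiset.card t) htc (g i) (g' i)
        ((t.map g).prod) ((t.map g').prod) (hg0 i) (hg0' i)
        (hg i) h0 h0' hA
      exact ⟨o1, o2, fun e he => a3 e (by omega)⟩


open Classical in
/-- The finite set of multi-indices on a finite type `σ` of total degree at most `k`. -/
noncomputable def degLE (σ : Type*) [Fintype σ] (k : ℕ) : Finset (σ →₀ ℕ) :=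
  (Finset.Iic (Finsupp.equivFunOnFinite.symm (fun _ : σ => k))).filter
    (fun d => (d.sum fun _ n => n) ≤ k)

/-- Truncation of a multivariate power series to total degree at most `k`,
as a multivariate polynomial. -/
noncomputable def truncTotalDeg {σ : Type*} [Fintype σ] (k : ℕ)
    (f : MvPowerSeries σ ℝ) : MvPolynomial σ ℝ :=
  ∑ d ∈ degLE σ k, MvPolynomial.monomial d (MvPowerSeries.coeff d f)

/-- Substitution of the family `g` (assumed to have zero constant terms) into
the power series `f`: the coefficient at the multi-index `e` only involves
the terms of `f` of total degree at most `|e|`. -/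
noncomputable def psSubst {σ τ : Type*} [Fintype σ]
    (f : MvPowerSeries σ ℝ) (g : σ → MvPowerSeries τ ℝ) : MvPowerSeries τ ℝ :=
  fun e => MvPowerSeries.coeff e
    (MvPolynomial.aeval g (truncTotalDeg (e.sum fun _ n => n) f))

/-- Stabilization of the iteration `v⁰ = 0`, `vᵐ⁺¹ = r(x, vᵐ)`: every coefficient of
order ≤ k is determined after at most k iterations and does not change thereafter. -/
lemma coeff_psSubst {σ τ : Type*} [Fintype σ] (f : MvPowerSeries σ ℝ)
    (g : σ → MvPowerSeries τ ℝ) (e : τ →₀ ℕ) :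
    MvPowerSeries.coeff e (psSubst f g) = MvPowerSeries.coeff e
      (MvPolynomial.aeval g (truncTotalDeg (e.sum fun _ n => n) f)) := rfl

lemma mem_degLE {σ : Type*} [Fintype σ] {k : ℕ} {u : σ →₀ ℕ} (hu : u ∈ degLE σ k) :
    (u.sum fun _ n => n) ≤ k := (Finset.mem_filter.mp hu).2

theorem iteration_stabilizes (n d : ℕ)
    (r : Fin d → MvPowerSeries (Fin n ⊕ Fin d) ℝ)
    (hr : ∀ j, ∀ m : (Fin n ⊕ Fin d) →₀ ℕ, (m.sum fun _ a => a) ≤ 1 →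
      MvPowerSeries.coeff m (r j) = 0)
    (v : ℕ → Fin d → MvPowerSeries (Fin n) ℝ)
    (hv0 : ∀ j, v 0 j = 0)
    (hvs : ∀ m j, v (m + 1) j = psSubst (r j) (Sum.elim (fun i => MvPowerSeries.X i) (v m))) :
    ∀ k : ℕ, ∀ e : Fin n →₀ ℕ, (e.sum fun _ a => a) ≤ k → ∀ j : Fin d, ∀ m : ℕ, k ≤ m →
      MvPowerSeries.coeff e (v m j) = MvPowerSeries.coeff e (v k j) := by
  have H : ∀ m j, MvPowerSeries.coeff (0 : Fin n →₀ ℕ) (v m j) = 0 := by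
    intro m
    induction m with
    | zero => intro j; rw [hv0]; simp
    | succ m ih =>
      intro j
      rw [hvs, coeff_psSubst]
      have h0 : ((0 : Fin n →₀ ℕ).sum fun _ a => a) = 0 := by simp
      rw [h0]
      have htr : truncTotalDeg 0 (r j) = 0 := by
        apply Finset.sum_eq_zero
        intro u hu
        rw [hr j u (le_trans (mem_degLE hu) (by omega))]
        exact MvPolynomial.monomial_zero
      rw [htr, map_zero, map_zero]
  intro k
  induction k with
  | zero =>
    intro e he j m _
    have he0 : e = 0 := (degsum_eq_zero_iff _ e).mp (Nat.le_zero.mp he)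
    rw [he0, H, H]
  | succ k ih =>
    intro e he j m hm
    obtain ⟨m', rfl⟩ : ∃ m', m = m' + 1 := ⟨m - 1, by omega⟩
    have hm' : k ≤ m' := by omega
    have hg0 : ∀ i, MvPowerSeries.coeff 0
        (Sum.elim (fun i => (MvPowerSeries.X i : MvPowerSeries (Fin n) ℝ)) (v m') i) = 0 := by
      rintro (i | l)
      · exact MvPowerSeries.coeff_zero_X i
      · exact H m' l
    have hg0' : ∀ i, MvPowerSeries.coeff 0
        (Sum.elim (fun i => (MvPowerSeries.X i : MvPowerSeries (Fin n) ℝ)) (v k) i) = 0 := by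
      rintro (i | l)
      · exact MvPowerSeries.coeff_zero_X i
      · exact H k l
    have hgA : ∀ i, ∀ e' : Fin n →₀ ℕ, (e'.sum fun _ a => a) ≤ k →
        MvPowerSeries.coeff e' (Sum.elim (fun i => (MvPowerSeries.X i : MvPowerSeries (Fin n) ℝ)) (v m') i)
          = MvPowerSeries.coeff e' (Sum.elim (fun i => (MvPowerSeries.X i : MvPowerSeries (Fin n) ℝ)) (v k) i) := by
      rintro (i | l) e' he'
      · rfl
      · exact ih e' he' l m' hm'
    rw [hvs, hvs, coeff_psSubst, coeff_psSubst]
    unfold truncTotalDeg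
    rw [map_sum, map_sum, map_sum, map_sum]
    apply Finset.sum_congr rfl
    intro u hu
    by_cases hdeg : (u.sum fun _ a => a) ≤ 1
    · rw [hr j u hdeg]; simp
    · push_neg at hdeg
      rw [MvPolynomial.aeval_monomial, MvPolynomial.aeval_monomial]
      rw [← map_prod_toMultiset, ← map_prod_toMultiset]
      have hcard : Multiset.card u.toMultiset = u.sum fun _ a => a := by
        rw [Finsupp.card_toMultiset]; rfl
      have hune : u.toMultiset ≠ 0 := by
        intro h
        rw [h] at hcard
        simp at hcard
        omega
      obtain ⟨-, -, hA⟩ := agree_prod_multiset k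
        (Sum.elim (fun i => (MvPowerSeries.X i : MvPowerSeries (Fin n) ℝ)) (v m'))
        (Sum.elim (fun i => (MvPowerSeries.X i : MvPowerSeries (Fin n) ℝ)) (v k))
        hg0 hg0' hgA u.toMultiset hune
      rw [← Algebra.smul_def, ← Algebra.smul_def, map_smul, map_smul, hA e (by omega)]
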